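/- For every complex z with Re z > 1, the integrals g₁(z) = ∫_{−∞}^{0} Φ(e^{2λ})·e^{λ(z−1/2)} dλ and g₂(z) = 2·∫_{0}^{∞} φ(e^{2λ})·e^{λz} dλ converge absolutely, and ∑_p (log p)·p^{−z} = (π^{z/2}/Γ(z/2))·( 1/(z−1) + g₁(z) + g₂(z) ), the sum ranging over all primes p. -/

import Mathlib

open Complex Filter Topology MeasureTheory Set
open scoped NNReal

noncomputable def primePhi (x : ℝ) : ℝ :=
  ∑' p : Nat.Primes, Real.log (p : ℕ) * Real.exp (-((p : ℕ) : ℝ) ^ 2 * Real.pi * x)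

noncomputable def bigPhi (x : ℝ) : ℝ :=
  (2 * Real.sqrt x * primePhi x - 1) / x ^ ((1 : ℝ) / 4)

noncomputable def gam (z : ℂ) : ℂ := Complex.Gamma (z / 2) / (Real.pi : ℂ) ^ (z / 2)

def NontrivialZero (ρ : ℂ) : Prop := riemannZeta ρ = 0 ∧ 0 < ρ.re ∧ ρ.re < 1

noncomputable def Zfun (l : ℝ) : ℂ :=
  ∑' ρ : {ρ : ℂ // NontrivialZero ρ}, gam ρ * Complex.exp (-(l : ℂ) * ((ρ : ℂ) - 1 / 2))


lemma aux_log_nonneg (p : Nat.Primes) : 0 ≤ Real.log ((p : ℕ) : ℝ) :=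
  Real.log_nonneg (by exact_mod_cast p.prop.one_lt.le)

lemma aux_summable_log_div_rpow {σ : ℝ} (hσ : 1 < σ) :
    Summable fun p : Nat.Primes => Real.log (p : ℕ) / ((p : ℕ) : ℝ) ^ σ := by
  set ε : ℝ := (σ - 1) / 2 with hε
  have hε0 : 0 < ε := by rw [hε]; linarith
  have hsum : Summable fun n : ℕ => ε⁻¹ * (n : ℝ) ^ (ε - σ) := by
    refine Summable.mul_left _ ?_
    rw [Real.summable_nat_rpow]
    rw [hε]; linarith
  have hsum2 : Summable fun p : Nat.Primes =>
      ε⁻¹ * (((p : ℕ) : ℝ)) ^ (ε - σ) :=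
    hsum.comp_injective (fun a b h => Subtype.ext (by exact_mod_cast h))
  refine hsum2.of_nonneg_of_le (fun p => ?_) (fun p => ?_)
  · have := aux_log_nonneg p
    positivity
  · have hp : (0:ℝ) < ((p : ℕ) : ℝ) := by exact_mod_cast p.prop.pos
    have h1 : Real.log ((p : ℕ) : ℝ) ≤ ((p : ℕ) : ℝ) ^ ε / ε :=
      Real.log_le_rpow_div hp.le hε0
    have h2 : Real.log ((p : ℕ) : ℝ) / ((p : ℕ) : ℝ) ^ σ
        ≤ (((p : ℕ) : ℝ) ^ ε / ε) / ((p : ℕ) : ℝ) ^ σ :=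
      div_le_div_of_nonneg_right h1 (by positivity)
    refine h2.trans_eq ?_
    rw [Real.rpow_sub hp]
    ring

lemma aux_summable_primePhi {t : ℝ} (ht : 0 < t) :
    Summable fun p : Nat.Primes =>
      Real.log ((p : ℕ) : ℝ) * Real.exp (-((p : ℕ) : ℝ) ^ 2 * Real.pi * t) := by
  have hr1 : Real.exp (-Real.pi * t) < 1 :=
    Real.exp_lt_one_iff.mpr (by nlinarith [Real.pi_pos])
  have hsum : Summable fun n : ℕ => (n : ℝ) * Real.exp (-Real.pi * t) ^ n := by
    have := summable_pow_mul_geometric_of_norm_lt_one (R := ℝ) 1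
      (r := Real.exp (-Real.pi * t)) (by rwa [Real.norm_eq_abs, abs_of_pos (Real.exp_pos _)])
    simpa using this
  have hsum2 : Summable fun p : Nat.Primes =>
      (((p : ℕ) : ℝ)) * Real.exp (-Real.pi * t) ^ ((p : ℕ)) :=
    hsum.comp_injective (fun a b h => Subtype.ext (by exact_mod_cast h))
  refine hsum2.of_nonneg_of_le (fun p => ?_) (fun p => ?_)
  · have := aux_log_nonneg p
    positivity
  · have hp1 : (1:ℝ) ≤ ((p : ℕ) : ℝ) := by exact_mod_cast p.prop.one_lt.le
    have hlog : Real.log ((p : ℕ) : ℝ) ≤ ((p : ℕ) : ℝ) := by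
      have := Real.log_le_sub_one_of_pos (by linarith : (0:ℝ) < ((p : ℕ) : ℝ))
      linarith
    have hexp : Real.exp (-((p : ℕ) : ℝ) ^ 2 * Real.pi * t)
        ≤ Real.exp (-Real.pi * t) ^ ((p : ℕ)) := by
      rw [← Real.exp_nat_mul]
      apply Real.exp_le_exp.mpr
      have hπ := Real.pi_pos
      have hpp : ((p : ℕ) : ℝ) ≤ ((p : ℕ) : ℝ) ^ 2 := by nlinarith
      have := mul_le_mul_of_nonneg_right hpp (mul_pos hπ ht).le
      nlinarith
    exact mul_le_mul hlog hexp (Real.exp_pos _).le (by linarith)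

lemma primePhi_nonneg (x : ℝ) : 0 ≤ primePhi x :=
  tsum_nonneg fun p => mul_nonneg (aux_log_nonneg p) (Real.exp_pos _).le

lemma measurable_primePhi : Measurable primePhi := by
  have heq : primePhi = fun x => ((∑' p : Nat.Primes,
      Real.toNNReal (Real.log ((p : ℕ) : ℝ) * Real.exp (-((p : ℕ) : ℝ) ^ 2 * Real.pi * x)) : ℝ≥0) : ℝ) := by
    funext x
    rw [NNReal.coe_tsum]
    exact tsum_congr fun p => (Real.coe_toNNReal _
      (mul_nonneg (aux_log_nonneg p) (Real.exp_pos _).le)).symm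
  rw [heq]
  refine Measurable.coe_nnreal_real (Measurable.nnreal_tsum fun p => ?_)
  exact measurable_real_toNNReal.comp
    ((measurable_const.mul ((measurable_const.mul measurable_id).exp)).comp measurable_id)

lemma aux_hasSum_primePhi_complex {t : ℝ} (ht : 0 < t) :
    HasSum (fun p : Nat.Primes =>
        (Real.log ((p : ℕ) : ℝ) : ℂ) * Real.exp (-Real.pi * ((p : ℕ) : ℝ) ^ 2 * t))
      ((primePhi t : ℝ) : ℂ) := by
  have h := (aux_summable_primePhi ht).hasSum
  have h2 : HasSum (fun p : Nat.Primes =>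
      ((Real.log ((p : ℕ) : ℝ) * Real.exp (-((p : ℕ) : ℝ) ^ 2 * Real.pi * t) : ℝ) : ℂ))
      ((primePhi t : ℝ) : ℂ) := hasSum_ofReal.mpr h
  refine h2.congr_fun fun p => ?_
  rw [ofReal_mul]
  norm_num
  left
  congr 1
  ring

lemma aux_hasSum_mellin {z : ℂ} (hz : 1 < z.re) :
    HasSum (fun p : Nat.Primes =>
        Gammaℝ z * (Real.log ((p : ℕ) : ℝ) : ℂ) / ((|((p : ℕ) : ℝ)| : ℝ) : ℂ) ^ z)
      (mellin (fun t => ((primePhi t : ℝ) : ℂ)) (z / 2)) := by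
  refine hasSum_mellin_pi_mul_sq (by linarith : 0 < z.re) (fun t ht => ?_) ?_
  · have h := aux_hasSum_primePhi_complex (mem_Ioi.mp ht)
    refine h.congr_fun fun p => ?_
    rw [if_neg]
    have : (0:ℝ) < ((p : ℕ) : ℝ) := by exact_mod_cast p.prop.pos
    exact this.ne'
  · have h := aux_summable_log_div_rpow hz
    refine h.congr fun p => ?_
    have h0 : (0:ℝ) ≤ ((p : ℕ) : ℝ) := by positivity
    rw [_root_.abs_of_nonneg h0, Complex.norm_real, Real.norm_eq_abs,
      _root_.abs_of_nonneg (aux_log_nonneg p)]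

lemma aux_ofReal_tsum_le {ι : Type*} [Countable ι] {f : ι → ℝ} (h0 : ∀ i, 0 ≤ f i) :
    ENNReal.ofReal (∑' i, f i) ≤ ∑' i, ENNReal.ofReal (f i) := by
  by_cases hs : Summable f
  · rw [ENNReal.ofReal_tsum_of_nonneg h0 hs]
  · rw [tsum_eq_zero_of_not_summable hs]
    simp

lemma aux_cont_term (p : Nat.Primes) :
    Continuous fun t : ℝ => Real.log ((p : ℕ) : ℝ) * Real.exp (-(Real.pi * ((p : ℕ) : ℝ) ^ 2) * t) :=
  continuous_const.mul ((continuous_const.mul continuous_id).rexp)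

lemma aux_integrable_term {a b : ℝ} (ha : -1 < a) (hb : 0 < b) (c : ℝ) :
    IntegrableOn (fun t : ℝ => t ^ a * (c * Real.exp (-b * t))) (Ioi 0) := by
  have h := integrableOn_rpow_mul_exp_neg_mul_rpow (p := (1:ℝ)) ha one_pos hb
  have h2 : IntegrableOn (fun t : ℝ => t ^ a * Real.exp (-b * t)) (Ioi 0) := by
    refine h.congr_fun (fun t ht => ?_) measurableSet_Ioi
    beta_reduce
    rw [Real.rpow_one]
  have h3 := h2.const_mul c
  refine IntegrableOn.congr_fun h3 (fun t ht => ?_) measurableSet_Ioi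
  ring

lemma aux_integrableOn_mellin_primePhi {z : ℂ} (hz : 1 < z.re) :
    IntegrableOn (fun t : ℝ => (t : ℂ) ^ (z / 2 - 1) • ((primePhi t : ℝ) : ℂ)) (Ioi 0) := by
  have hπ := Real.pi_pos
  have hb : ∀ p : Nat.Primes, (0:ℝ) < Real.pi * ((p : ℕ) : ℝ) ^ 2 := by
    intro p
    have : (0:ℝ) < ((p : ℕ) : ℝ) := by exact_mod_cast p.prop.pos
    positivity
  have ha : (-1:ℝ) < z.re / 2 - 1 := by linarith
  constructor
  · refine AEStronglyMeasurable.smul (𝕜 := ℂ) ?_ ?_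
    · refine ContinuousOn.aestronglyMeasurable
        (continuousOn_of_forall_continuousAt fun t ht => ?_) measurableSet_Ioi
      exact continuousAt_ofReal_cpow_const _ _ (Or.inr (ne_of_gt (mem_Ioi.mp ht)))
    · exact (Complex.measurable_ofReal.comp measurable_primePhi).aestronglyMeasurable
  · rw [hasFiniteIntegral_iff_norm]
    -- the termwise real functions
    set h : Nat.Primes → ℝ → ℝ := fun p t =>
      t ^ (z.re / 2 - 1) * (Real.log ((p : ℕ) : ℝ) *
        Real.exp (-(Real.pi * ((p : ℕ) : ℝ) ^ 2) * t)) with hh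
    have hterm_nonneg : ∀ p t, t ∈ Ioi (0:ℝ) → 0 ≤ h p t := by
      intro p t ht
      have := aux_log_nonneg p
      have ht' := (mem_Ioi.mp ht)
      positivity
    have step1 : (∫⁻ t : ℝ in Ioi 0, ENNReal.ofReal
          ‖(t : ℂ) ^ (z / 2 - 1) • ((primePhi t : ℝ) : ℂ)‖)
        ≤ ∫⁻ t : ℝ in Ioi 0, ∑' p : Nat.Primes, ENNReal.ofReal (h p t) := by
      refine lintegral_mono_ae ((ae_restrict_mem measurableSet_Ioi).mono fun t ht => ?_)
      have ht' : (0:ℝ) < t := mem_Ioi.mp ht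
      have hnorm : ‖(t : ℂ) ^ (z / 2 - 1) • ((primePhi t : ℝ) : ℂ)‖
          = t ^ (z.re / 2 - 1) * primePhi t := by
        rw [norm_smul, Complex.norm_cpow_eq_rpow_re_of_pos ht',
          Complex.norm_real, Real.norm_eq_abs, _root_.abs_of_nonneg (primePhi_nonneg t)]
        congr 2
        simp [Complex.sub_re, Complex.div_re]
      rw [hnorm]
      have hexpand : t ^ (z.re / 2 - 1) * primePhi t = ∑' p : Nat.Primes, h p t := by
        rw [primePhi, ← tsum_mul_left]
        refine tsum_congr fun p => ?_
        rw [hh]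
        simp only []
        congr 2
        ring
      rw [hexpand]
      exact aux_ofReal_tsum_le fun p => hterm_nonneg p t ht
    have step2 : (∫⁻ t : ℝ in Ioi 0, ∑' p : Nat.Primes, ENNReal.ofReal (h p t))
        = ∑' p : Nat.Primes, ∫⁻ t : ℝ in Ioi 0, ENNReal.ofReal (h p t) := by
      refine lintegral_tsum fun p => ?_
      refine (Measurable.ennreal_ofReal ?_).aemeasurable
      exact ((Measurable.pow_const measurable_id _).mul (aux_cont_term p).measurable)
    have hint : ∀ p : Nat.Primes, IntegrableOn (h p) (Ioi 0) := fun p =>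
      aux_integrable_term ha (hb p) _
    have step3 : ∀ p : Nat.Primes, (∫⁻ t : ℝ in Ioi 0, ENNReal.ofReal (h p t))
        = ENNReal.ofReal (∫ t in Ioi 0, h p t) := by
      intro p
      rw [← ofReal_integral_eq_lintegral_ofReal (hint p)
        ((ae_restrict_mem measurableSet_Ioi).mono fun t ht => hterm_nonneg p t ht)]
    have hval : ∀ p : Nat.Primes, (∫ t in Ioi 0, h p t)
        = Real.log ((p : ℕ) : ℝ) *
          ((1 / (Real.pi * ((p : ℕ) : ℝ) ^ 2)) ^ (z.re / 2) * Real.Gamma (z.re / 2)) := by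
      intro p
      have hform := Real.integral_rpow_mul_exp_neg_mul_Ioi (by linarith : (0:ℝ) < z.re / 2) (hb p)
      calc (∫ t in Ioi 0, h p t)
          = ∫ t in Ioi 0, Real.log ((p : ℕ) : ℝ) *
            (t ^ (z.re / 2 - 1) * Real.exp (-(Real.pi * ((p : ℕ) : ℝ) ^ 2 * t))) := by
            refine setIntegral_congr_fun measurableSet_Ioi fun t ht => ?_
            simp only [hh]
            rw [show -(Real.pi * ((p : ℕ) : ℝ) ^ 2) * t = -(Real.pi * ((p : ℕ) : ℝ) ^ 2 * t) by
              ring]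
            ring
        _ = Real.log ((p : ℕ) : ℝ) *
            ((1 / (Real.pi * ((p : ℕ) : ℝ) ^ 2)) ^ (z.re / 2) * Real.Gamma (z.re / 2)) := by
            rw [integral_const_mul, hform]
    -- summability of the values
    have hsummable : Summable (fun p : Nat.Primes => ∫ t in Ioi 0, h p t) := by
      have base := (aux_summable_log_div_rpow hz).mul_left
        ((1 / Real.pi) ^ (z.re / 2) * Real.Gamma (z.re / 2))
      refine base.congr fun p => ?_
      have hp : (0:ℝ) < ((p : ℕ) : ℝ) := by exact_mod_cast p.prop.pos
      rw [hval p]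
      have : (1 / (Real.pi * ((p : ℕ) : ℝ) ^ 2)) ^ (z.re / 2)
          = (1 / Real.pi) ^ (z.re / 2) * (((p : ℕ) : ℝ) ^ z.re)⁻¹ := by
        rw [one_div, Real.inv_rpow (by positivity), Real.mul_rpow hπ.le (by positivity),
          mul_inv, ← Real.inv_rpow hπ.le, ← one_div]
        congr 2
        rw [← Real.rpow_natCast (((p : ℕ) : ℝ)) 2, ← Real.rpow_mul hp.le]
        norm_num
        rw [show (2:ℝ) * (z.re / 2) = z.re by ring]
      rw [this]
      field_simp
    calc (∫⁻ t : ℝ in Ioi 0, ENNReal.ofReal ‖(t : ℂ) ^ (z / 2 - 1) • ((primePhi t : ℝ) : ℂ)‖)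
        ≤ ∑' p : Nat.Primes, ∫⁻ t : ℝ in Ioi 0, ENNReal.ofReal (h p t) := step1.trans_eq step2
      _ = ∑' p : Nat.Primes, ENNReal.ofReal (∫ t in Ioi 0, h p t) := tsum_congr step3
      _ = ENNReal.ofReal (∑' p : Nat.Primes, ∫ t in Ioi 0, h p t) := by
          rw [ENNReal.ofReal_tsum_of_nonneg (fun p =>
            integral_nonneg_of_ae ((ae_restrict_mem measurableSet_Ioi).mono
              fun t ht => hterm_nonneg p t ht)) hsummable]
      _ < ⊤ := ENNReal.ofReal_lt_top

lemma aux_cpow_exp (a : ℝ) (w : ℂ) : ((Real.exp a : ℝ) : ℂ) ^ w = Complex.exp (a * w) := by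
  rw [Complex.cpow_def_of_ne_zero (by exact_mod_cast (Real.exp_pos a).ne'),
    ← Complex.ofReal_log (Real.exp_pos a).le, Real.log_exp]

lemma aux_image_exp : (fun l : ℝ => Real.exp (2 * l)) '' univ = Ioi 0 := by
  ext x
  simp only [image_univ, mem_range, mem_Ioi]
  constructor
  · rintro ⟨l, rfl⟩
    exact Real.exp_pos _
  · intro hx
    exact ⟨Real.log x / 2, by rw [mul_div_cancel₀ _ (two_ne_zero), Real.exp_log hx]⟩

lemma aux_deriv_exp (l : ℝ) :
    HasDerivWithinAt (fun l : ℝ => Real.exp (2 * l)) (2 * Real.exp (2 * l)) univ l := by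
  have h2 : HasDerivAt (fun y : ℝ => 2 * y) 2 l := by
    simpa using (hasDerivAt_id l).const_mul 2
  have h : HasDerivAt (fun l : ℝ => Real.exp (2 * l)) (Real.exp (2 * l) * 2) l :=
    (Real.hasDerivAt_exp (2 * l)).comp l h2
  exact (h.hasDerivWithinAt).congr_deriv (mul_comm _ _)

lemma aux_inj_exp : InjOn (fun l : ℝ => Real.exp (2 * l)) univ := by
  intro a _ b _ h
  have := Real.exp_injective h
  linarith

/-- The change-of-variables identity for the `G` function. -/
lemma aux_cov_point {z : ℂ} (l : ℝ) :
    |2 * Real.exp (2 * l)| • ((Real.exp (2 * l) : ℝ) : ℂ) ^ (z / 2 - 1)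
        • ((primePhi (Real.exp (2 * l)) : ℝ) : ℂ)
      = 2 * (primePhi (Real.exp (2 * l)) : ℂ) * Complex.exp ((l : ℂ) * z) := by
  rw [_root_.abs_of_pos (by positivity : (0:ℝ) < 2 * Real.exp (2 * l))]
  rw [aux_cpow_exp]
  rw [Complex.real_smul]
  push_cast
  rw [smul_eq_mul, show (2:ℂ) * ↑l * (z / 2 - 1) = ↑l * z - 2 * ↑l by ring,
    Complex.exp_sub]
  field_simp [Complex.exp_ne_zero]

lemma aux_exp_integrable_Iic {z : ℂ} (hz : 1 < z.re) :
    IntegrableOn (fun l : ℝ => Complex.exp ((l : ℂ) * (z - 1))) (Iic (0:ℝ)) := by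
  have hc : (0:ℝ) < z.re - 1 := by linarith
  have hg : IntegrableOn (fun l : ℝ => Real.exp ((z.re - 1) * l)) (Iic (0:ℝ)) := by
    have h1 : Integrable ((Ioi (0:ℝ)).indicator fun x : ℝ => Real.exp (-(z.re - 1) * x)) :=
      (integrable_indicator_iff measurableSet_Ioi).mpr
        ((exp_neg_integrableOn_Ioi 0 hc).mono_set le_rfl)
    have h2 := h1.comp_neg
    have h3 : (fun x : ℝ => ((Ioi (0:ℝ)).indicator fun x : ℝ => Real.exp (-(z.re - 1) * x)) (-x))
        = (Iio (0:ℝ)).indicator fun x : ℝ => Real.exp ((z.re - 1) * x) := by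
      funext x
      by_cases hx : x < 0
      · rw [indicator_of_mem (by simpa using hx : -x ∈ Ioi (0:ℝ)),
          indicator_of_mem (mem_Iio.mpr hx)]
        ring_nf
      · rw [indicator_of_notMem (by simpa using hx), indicator_of_notMem (by simpa using hx)]
    rw [h3] at h2
    have h4 : IntegrableOn (fun x : ℝ => Real.exp ((z.re - 1) * x)) (Iio (0:ℝ)) :=
      (integrable_indicator_iff measurableSet_Iio).mp h2
    exact (integrableOn_Iic_iff_integrableOn_Iio).mpr h4
  refine Integrable.mono' hg ?_ ?_
  · exact (Complex.continuous_exp.comp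
      (Complex.continuous_ofReal.mul continuous_const)).aestronglyMeasurable
  · refine ae_of_all _ fun l => ?_
    rw [Complex.norm_exp]
    simp only [Complex.mul_re, Complex.ofReal_re, Complex.ofReal_im, Complex.sub_re,
      Complex.one_re, zero_mul, sub_zero]
    rw [mul_comm]

lemma aux_exp_integral_Iic {z : ℂ} (hz : 1 < z.re) :
    ∫ l in Iic (0:ℝ), Complex.exp ((l : ℂ) * (z - 1)) = 1 / (z - 1) := by
  have hc : (0:ℝ) < z.re - 1 := by linarith
  have hz1 : z - 1 ≠ 0 := by
    intro h
    have := congrArg Complex.re h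
    simp at this
    linarith
  have hderiv : ∀ x ∈ Iic (0:ℝ),
      HasDerivAt (fun l : ℝ => Complex.exp ((l : ℂ) * (z - 1)) / (z - 1))
        (Complex.exp ((x : ℂ) * (z - 1))) x := by
    intro x _
    have h0 : HasDerivAt (fun w : ℂ => Complex.exp (w * (z - 1)) / (z - 1))
        (Complex.exp ((x : ℂ) * (z - 1))) (x : ℂ) := by
      have h1 : HasDerivAt (fun w : ℂ => Complex.exp (w * (z - 1)))
          (Complex.exp ((x : ℂ) * (z - 1)) * (z - 1)) (x : ℂ) := by
        simpa using (((hasDerivAt_id (x : ℂ)).mul_const (z - 1)).cexp)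
      have := h1.div_const (z - 1)
      rwa [mul_div_cancel_right₀ _ hz1] at this
    exact h0.comp_ofReal
  have htends : Tendsto (fun l : ℝ => Complex.exp ((l : ℂ) * (z - 1)) / (z - 1))
      atBot (𝓝 0) := by
    rw [tendsto_zero_iff_norm_tendsto_zero]
    have hnorm : (fun l : ℝ => ‖Complex.exp ((l : ℂ) * (z - 1)) / (z - 1)‖)
        = fun l : ℝ => Real.exp ((z.re - 1) * l) / ‖z - 1‖ := by
      funext l
      rw [norm_div, Complex.norm_exp]
      congr 2
      simp [Complex.mul_re]
      ring
    rw [hnorm]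
    have h1 : Tendsto (fun l : ℝ => (z.re - 1) * l) atBot atBot :=
      Tendsto.const_mul_atBot hc tendsto_id
    have h2 : Tendsto (fun l : ℝ => Real.exp ((z.re - 1) * l)) atBot (𝓝 0) :=
      Real.tendsto_exp_atBot.comp h1
    simpa using h2.div_const ‖z - 1‖
  have := integral_Iic_of_hasDerivAt_of_tendsto' hderiv (aux_exp_integrable_Iic hz) htends
  rw [this]
  simp [Complex.exp_zero]

lemma aux_bigPhi_point {z : ℂ} (l : ℝ) :
    (bigPhi (Real.exp (2 * l)) : ℂ) * Complex.exp ((l : ℂ) * (z - 1 / 2))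
      = 2 * (primePhi (Real.exp (2 * l)) : ℂ) * Complex.exp ((l : ℂ) * z)
        - Complex.exp ((l : ℂ) * (z - 1)) := by
  have hsqrt : Real.sqrt (Real.exp (2 * l)) = Real.exp l := by
    rw [show 2 * l = l + l by ring, Real.exp_add, Real.sqrt_mul_self (Real.exp_pos l).le]
  have hrpow : (Real.exp (2 * l)) ^ ((1:ℝ) / 4) = Real.exp (l / 2) := by
    rw [Real.rpow_def_of_pos (Real.exp_pos _), Real.log_exp]
    congr 1
    ring
  rw [bigPhi, hsqrt, hrpow]
  push_cast
  rw [div_mul_eq_mul_div, div_eq_iff (Complex.exp_ne_zero _)]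
  have e1 : Complex.exp (l:ℂ) * Complex.exp ((l:ℂ) * (z - 1/2))
      = Complex.exp ((l:ℂ) * z) * Complex.exp ((l:ℂ)/2) := by
    rw [← Complex.exp_add, ← Complex.exp_add]; congr 1; ring
  have e2 : Complex.exp ((l:ℂ) * (z - 1/2))
      = Complex.exp ((l:ℂ) * (z - 1)) * Complex.exp ((l:ℂ)/2) := by
    rw [← Complex.exp_add]; congr 1; ring
  linear_combination (2 * ((primePhi (Real.exp (2 * l)) : ℝ) : ℂ)) * e1 - e2

/-- For Re z > 1, the integrals g₁(z) = ∫_{-∞}^0 Φ(e^{2λ})e^{λ(z-1/2)} dλ and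
g₂(z) = 2∫_0^∞ φ(e^{2λ})e^{λz} dλ converge absolutely, and
∑_p (log p)·p^{-z} = (π^{z/2}/Γ(z/2))·(1/(z-1) + g₁(z) + g₂(z)). -/
theorem stmt_7 (z : ℂ) (hz : 1 < z.re) :
    IntegrableOn (fun l : ℝ =>
        (bigPhi (Real.exp (2 * l)) : ℂ) * Complex.exp ((l : ℂ) * (z - 1 / 2)))
      (Iio (0 : ℝ)) MeasureTheory.volume ∧
    IntegrableOn (fun l : ℝ =>
        (primePhi (Real.exp (2 * l)) : ℂ) * Complex.exp ((l : ℂ) * z))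
      (Ioi (0 : ℝ)) MeasureTheory.volume ∧
    ∑' p : Nat.Primes, (Real.log (p : ℕ) : ℂ) * ((p : ℕ) : ℂ) ^ (-z)
      = ((Real.pi : ℂ) ^ (z / 2) / Complex.Gamma (z / 2)) *
          (1 / (z - 1)
            + (∫ l in Iio (0 : ℝ),
                (bigPhi (Real.exp (2 * l)) : ℂ) * Complex.exp ((l : ℂ) * (z - 1 / 2)))
            + 2 * ∫ l in Ioi (0 : ℝ),
                (primePhi (Real.exp (2 * l)) : ℂ) * Complex.exp ((l : ℂ) * z)) := by
  have hπ := Real.pi_pos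
  set g : ℝ → ℂ := fun t => (t : ℂ) ^ (z / 2 - 1) • ((primePhi t : ℝ) : ℂ) with hg
  have hint_g : IntegrableOn g (Ioi 0) := aux_integrableOn_mellin_primePhi hz
  have hCoV_int := integrableOn_image_iff_integrableOn_abs_deriv_smul MeasurableSet.univ
    (fun l _ => aux_deriv_exp l) aux_inj_exp g
  rw [aux_image_exp] at hCoV_int
  set W : ℝ → ℂ := fun l => 2 * (primePhi (Real.exp (2 * l)) : ℂ) * Complex.exp ((l : ℂ) * z)
    with hW
  have hWeq : (fun l : ℝ => |2 * Real.exp (2 * l)| • g (Real.exp (2 * l))) = W := by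
    funext l
    rw [hW, hg]
    exact aux_cov_point (z := z) l
  have hWint : Integrable W := by
    rw [← integrableOn_univ, ← hWeq]
    exact hCoV_int.mp hint_g
  have hCoV_eq := integral_image_eq_integral_abs_deriv_smul MeasurableSet.univ
    (fun l _ => aux_deriv_exp l) aux_inj_exp g
  rw [aux_image_exp] at hCoV_eq
  have hmellin_eq : mellin (fun t => ((primePhi t : ℝ) : ℂ)) (z / 2) = ∫ l, W l := by
    rw [mellin]
    rw [hCoV_eq, setIntegral_univ, ← hWeq]
  have hexp_int_Iio : IntegrableOn (fun l : ℝ => Complex.exp ((l : ℂ) * (z - 1))) (Iio 0) :=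
    (aux_exp_integrable_Iic hz).mono_set Iio_subset_Iic_self
  have claim1 : IntegrableOn (fun l : ℝ =>
      (bigPhi (Real.exp (2 * l)) : ℂ) * Complex.exp ((l : ℂ) * (z - 1 / 2))) (Iio 0) := by
    have h := (hWint.integrableOn).sub hexp_int_Iio
    refine IntegrableOn.congr_fun h (fun l _ => ?_) measurableSet_Iio
    exact (aux_bigPhi_point (z := z) l).symm
  have claim2 : IntegrableOn (fun l : ℝ =>
      (primePhi (Real.exp (2 * l)) : ℂ) * Complex.exp ((l : ℂ) * z)) (Ioi 0) := by
    have h2 := (hWint.integrableOn (s := Ioi 0)).const_mul ((2:ℂ)⁻¹)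
    refine IntegrableOn.congr_fun h2 (fun l _ => ?_) measurableSet_Ioi
    rw [hW]
    ring
  refine ⟨claim1, claim2, ?_⟩
  have hGa : Gammaℝ z ≠ 0 := Gammaℝ_ne_zero_of_re_pos (by linarith)
  have htsum : ∑' p : Nat.Primes, (Real.log (p : ℕ) : ℂ) * ((p : ℕ) : ℂ) ^ (-z)
      = (Gammaℝ z)⁻¹ * mellin (fun t => ((primePhi t : ℝ) : ℂ)) (z / 2) := by
    have h2 := (aux_hasSum_mellin hz).mul_left (Gammaℝ z)⁻¹
    rw [← h2.tsum_eq]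
    refine tsum_congr fun p => ?_
    have hp0 : ((p : ℕ) : ℂ) ≠ 0 := by
      exact_mod_cast (Nat.cast_ne_zero (R := ℂ)).mpr p.prop.pos.ne'
    have habs : ((|((p : ℕ) : ℝ)| : ℝ) : ℂ) = ((p : ℕ) : ℂ) := by
      rw [_root_.abs_of_nonneg (Nat.cast_nonneg _)]
      push_cast
      rfl
    have hpz : ((p : ℕ) : ℂ) ^ z ≠ 0 := by
      simp [Complex.cpow_eq_zero_iff, hp0]
    rw [habs, Complex.cpow_neg]
    field_simp
  rw [htsum]
  have hgampow : (Real.pi : ℂ) ^ (-z / 2) = ((Real.pi : ℂ) ^ (z / 2))⁻¹ := by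
    rw [show (-z / 2 : ℂ) = -(z / 2) by ring, Complex.cpow_neg]
  have hgam : (Real.pi : ℂ) ^ (z / 2) / Complex.Gamma (z / 2) = (Gammaℝ z)⁻¹ := by
    rw [Complex.Gammaℝ_def, hgampow, mul_inv, inv_inv, div_eq_mul_inv]
  rw [hgam]
  congr 1
  rw [hmellin_eq, ← intervalIntegral.integral_Iic_add_Ioi (hWint.integrableOn) (hWint.integrableOn)]
  have hIio : ∫ l in Iio (0:ℝ),
      (bigPhi (Real.exp (2 * l)) : ℂ) * Complex.exp ((l : ℂ) * (z - 1 / 2))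
      = (∫ l in Iic (0:ℝ), W l) - 1 / (z - 1) := by
    rw [setIntegral_congr_fun measurableSet_Iio (fun l _ => aux_bigPhi_point (z := z) l)]
    rw [integral_sub (hWint.integrableOn) hexp_int_Iio]
    congr 1
    · exact setIntegral_congr_set Iio_ae_eq_Iic
    · rw [setIntegral_congr_set Iio_ae_eq_Iic, aux_exp_integral_Iic hz]
  have hIoi : (2:ℂ) * ∫ l in Ioi (0:ℝ),
      (primePhi (Real.exp (2 * l)) : ℂ) * Complex.exp ((l : ℂ) * z)
      = ∫ l in Ioi (0:ℝ), W l := by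
    rw [← smul_eq_mul, ← integral_smul]
    refine setIntegral_congr_fun measurableSet_Ioi fun l _ => ?_
    rw [hW, smul_eq_mul]
    ring
  rw [hIio, hIoi]
  ring
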